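/- Let 1 > α > β > 0, q_1, q_2 > 0, let ℓ be a nonnegative integer with ℓ ≤ β/(2(α−β)), and let u_n = B_1 (n+1)^{−β/2}√(ln(B_2(n+1))) + B_3 (n+1)^{−(α−β)ℓ}, where B_1, B_3 ≥ 0 with at least one strictly positive and B_2 ≥ 1. Then u is α-moderate from K_α(β/2) onwards and β-moderate from K_β(β/2) onwards (with the explicit thresholds K_α(z), K_β(z)), and u is monotonically decreasing from e^{1/β}/B_2 onwards. -/

import Mathlib

noncomputable section

/-- Stepsizes `(n+1)^{-a}`. -/
def steps (a : ℝ) (n : ℕ) : ℝ := ((n : ℝ) + 1) ^ (-a)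

/-- A sequence `u` is `α`-moderate (parameters `α, β, q₁`) from `k₀` onwards if
`u_k / u_{k+1} ≤ (α_{k+1}/α_k)(β_k/β_{k+1}) e^{(q₁/2) α_{k+1}}` for all `k ≥ k₀`. -/
def AlphaModerateFrom (α β q1 : ℝ) (u : ℕ → ℝ) (k0 : ℕ) : Prop :=
  ∀ k : ℕ, k0 ≤ k →
    u k / u (k + 1) ≤
      (steps α (k + 1) / steps α k) * (steps β k / steps β (k + 1)) *
        Real.exp (q1 / 2 * steps α (k + 1))

/-- A sequence `u` is `β`-moderate (parameters `α, β, q₂`) from `k₀` onwards if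
`u_k / u_{k+1} ≤ (α_{k+1}/α_k)(β_k/β_{k+1}) e^{(q₂/2) β_{k+2}}` for all `k ≥ k₀`. -/
def BetaModerateFrom (α β q2 : ℝ) (u : ℕ → ℝ) (k0 : ℕ) : Prop :=
  ∀ k : ℕ, k0 ≤ k →
    u k / u (k + 1) ≤
      (steps α (k + 1) / steps α k) * (steps β k / steps β (k + 1)) *
        Real.exp (q2 / 2 * steps β (k + 2))


lemma stmt18key (α β : ℝ) (hβ : 0 < β) (hβα : β < α)
    (d : ℝ) (hd : 0 ≤ d) (hdc : d + (α - β) ≤ α - β + β / 2)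
    (B1 B2 B3 : ℝ) (hB1 : 0 ≤ B1) (hB3 : 0 ≤ B3) (hB2 : 1 ≤ B2)
    (x E : ℝ) (hx : 1 ≤ x) (hE : (α - β + β / 2) / x ≤ E) :
    B1 * x ^ (-(β / 2)) * Real.sqrt (Real.log (B2 * x)) + B3 * x ^ (-d)
      ≤ ((x + 1) / x) ^ (β - α) * Real.exp E *
        (B1 * (x + 1) ^ (-(β / 2)) * Real.sqrt (Real.log (B2 * (x + 1))) + B3 * (x + 1) ^ (-d)) := by
  have hx0 : (0:ℝ) < x := by linarith
  have hy0 : (0:ℝ) < x + 1 := by linarith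
  set c : ℝ := α - β + β / 2 with hcdef
  have hc : 0 < c := by simp only [hcdef]; linarith
  set r : ℝ := (x + 1) / x with hrdef
  have hr1 : 1 ≤ r := by rw [hrdef, le_div_iff₀ hx0]; linarith
  have hr0 : 0 < r := by linarith
  -- r^c ≤ exp E
  have hrc : r ^ c ≤ Real.exp E := by
    have h1 : r ≤ Real.exp (1 / x) := by
      have h := Real.add_one_le_exp (1 / x)
      rw [hrdef, div_le_iff₀ hx0]
      have h2 := mul_le_mul_of_nonneg_right h hx0.le
      calc x + 1 = (1/x + 1) * x := by field_simp; ring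
        _ ≤ _ := h2
    calc r ^ c ≤ (Real.exp (1/x)) ^ c := Real.rpow_le_rpow hr0.le h1 hc.le
      _ = Real.exp (1/x * c) := (Real.exp_mul _ _).symm
      _ ≤ Real.exp E := by
          apply Real.exp_le_exp.mpr
          calc 1/x * c = c / x := by ring
            _ ≤ E := hE
  -- exponent splitting facts
  have hsplit1 : x ^ (-(β/2)) = r ^ (β/2) * (x+1) ^ (-(β/2)) := by
    rw [hrdef, Real.div_rpow hy0.le hx0.le, Real.rpow_neg hy0.le]
    field_simp
    rw [← Real.rpow_add hx0]
    rw [show -(β/2) + β/2 = (0:ℝ) by ring, Real.rpow_zero]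
  have hsplit2 : x ^ (-d) = r ^ d * (x+1) ^ (-d) := by
    rw [hrdef, Real.div_rpow hy0.le hx0.le, Real.rpow_neg hy0.le]
    field_simp
    rw [← Real.rpow_add hx0]
    simp
  -- key per-term factor bounds
  have hfac1 : r ^ (β/2) ≤ r ^ (β - α) * Real.exp E := by
    have : r ^ (β/2) = r ^ (β - α) * r ^ c := by
      rw [← Real.rpow_add hr0]; congr 1; rw [hcdef]; ring
    rw [this]
    exact mul_le_mul_of_nonneg_left hrc (Real.rpow_nonneg hr0.le _)
  have hfac2 : r ^ d ≤ r ^ (β - α) * Real.exp E := by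
    have h2 : r ^ (d + (α - β)) ≤ r ^ c := Real.rpow_le_rpow_of_exponent_le hr1 hdc
    have : r ^ d = r ^ (β - α) * r ^ (d + (α - β)) := by
      rw [← Real.rpow_add hr0]; congr 1; ring
    rw [this]
    exact le_trans (mul_le_mul_of_nonneg_left h2 (Real.rpow_nonneg hr0.le _))
      (le_of_eq rfl) |>.trans (mul_le_mul_of_nonneg_left hrc (Real.rpow_nonneg hr0.le _))
  -- sqrt monotone
  have hsq : Real.sqrt (Real.log (B2 * x)) ≤ Real.sqrt (Real.log (B2 * (x+1))) := by
    apply Real.sqrt_le_sqrt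
    apply Real.log_le_log (by nlinarith)
    nlinarith
  have hynn := Real.rpow_nonneg hy0.le
  have hsqnn : 0 ≤ Real.sqrt (Real.log (B2 * x)) := Real.sqrt_nonneg _
  rw [mul_add]
  apply add_le_add
  · calc B1 * x ^ (-(β/2)) * Real.sqrt (Real.log (B2 * x))
        = r ^ (β/2) * (B1 * (x+1) ^ (-(β/2)) * Real.sqrt (Real.log (B2 * x))) := by
          rw [hsplit1]; ring
      _ ≤ (r ^ (β - α) * Real.exp E) * (B1 * (x+1) ^ (-(β/2)) * Real.sqrt (Real.log (B2 * (x+1)))) := by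
          apply mul_le_mul hfac1
          · apply mul_le_mul_of_nonneg_left hsq (by positivity)
          · positivity
          · positivity
      _ = r ^ (β - α) * Real.exp E * (B1 * (x+1) ^ (-(β/2)) * Real.sqrt (Real.log (B2 * (x+1)))) := by ring
  · calc B3 * x ^ (-d) = r ^ d * (B3 * (x+1) ^ (-d)) := by rw [hsplit2]; ring
      _ ≤ (r ^ (β - α) * Real.exp E) * (B3 * (x+1) ^ (-d)) := by
          apply mul_le_mul_of_nonneg_right hfac2 (by positivity)
      _ = r ^ (β - α) * Real.exp E * (B3 * (x+1) ^ (-d)) := by ring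


lemma stmt18mono (β B2 x : ℝ) (hβ : 0 < β) (hB2 : 1 ≤ B2)
    (hx : Real.exp (1 / β) / B2 ≤ x) :
    (x + 1) ^ (-(β / 2)) * Real.sqrt (Real.log (B2 * (x + 1)))
      ≤ x ^ (-(β / 2)) * Real.sqrt (Real.log (B2 * x)) := by
  have hB2p : (0:ℝ) < B2 := by linarith
  have hx0 : (0:ℝ) < x := lt_of_lt_of_le (by positivity) hx
  have hy0 : (0:ℝ) < x + 1 := by linarith
  have hBx : Real.exp (1 / β) ≤ B2 * x := by
    rw [div_le_iff₀ hB2p] at hx; linarith [hx]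
  set L : ℝ := Real.log (B2 * x) with hLdef
  have hL : 1 / β ≤ L := by
    rw [hLdef, ← Real.log_exp (1 / β)]
    exact Real.log_le_log (Real.exp_pos _) hBx
  have hLpos : 0 < L := lt_of_lt_of_le (by positivity) hL
  set r : ℝ := (x + 1) / x with hrdef
  have hr1 : 1 ≤ r := by rw [hrdef, le_div_iff₀ hx0]; linarith
  have hr0 : 0 < r := by linarith
  set t : ℝ := Real.log r with htdef
  have ht0 : 0 ≤ t := Real.log_nonneg hr1
  have hlog : Real.log (B2 * (x + 1)) = L + t := by
    rw [htdef, hLdef, hrdef, ← Real.log_mul (by positivity) (by positivity)]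
    congr 1
    field_simp
  have h1 : 1 + β * t ≤ r ^ β := by
    calc 1 + β * t = t * β + 1 := by ring
      _ ≤ Real.exp (t * β) := Real.add_one_le_exp _
      _ = (Real.exp t) ^ β := Real.exp_mul t β
      _ = r ^ β := by rw [htdef, Real.exp_log hr0]
  have hkey : L + t ≤ L * r ^ β := by
    have h2 : L + t ≤ L * (1 + β * t) := by
      have hβL : 1 ≤ L * β := (div_le_iff₀ hβ).mp hL
      nlinarith [mul_le_mul_of_nonneg_right hβL ht0]
    exact h2.trans (mul_le_mul_of_nonneg_left h1 hLpos.le)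
  have hid : (x + 1) ^ (-β) * r ^ β = x ^ (-β) := by
    rw [hrdef, Real.div_rpow hy0.le hx0.le, Real.rpow_neg hy0.le, Real.rpow_neg hx0.le]
    field_simp
  have hmain : (x + 1) ^ (-β) * (L + t) ≤ x ^ (-β) * L := by
    calc (x + 1) ^ (-β) * (L + t) ≤ (x + 1) ^ (-β) * (L * r ^ β) :=
          mul_le_mul_of_nonneg_left hkey (Real.rpow_nonneg hy0.le _)
      _ = ((x + 1) ^ (-β) * r ^ β) * L := by ring
      _ = x ^ (-β) * L := by rw [hid]
  have conv : ∀ a M : ℝ, 0 ≤ a →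
      a ^ (-(β / 2)) * Real.sqrt M = Real.sqrt (a ^ (-β) * M) := by
    intro a M ha
    rw [Real.sqrt_mul (Real.rpow_nonneg ha _) M, Real.sqrt_eq_rpow (a ^ (-β)),
      ← Real.rpow_mul ha, show -β * (1 / 2) = -(β / 2) by ring]
  rw [conv _ _ hy0.le, conv _ _ hx0.le, hlog]
  exact Real.sqrt_le_sqrt hmain

lemma stmt18thresh (s q c x m : ℝ) (hs0 : 0 < s) (hs1 : s < 1) (hq : 0 < q) (hc : 0 < c)
    (hm1 : 1 ≤ m) (hm : m ≤ 2 * x) (hx1 : 1 ≤ x)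
    (hx : (4 * c / q) ^ (1 / (1 - s)) ≤ x) :
    c / x ≤ q / 2 * m ^ (-s) := by
  have hx0 : (0:ℝ) < x := by linarith
  have hm0 : (0:ℝ) < m := by linarith
  have hA : (0:ℝ) < 4 * c / q := by positivity
  have hxs : 4 * c / q ≤ x ^ (1 - s) := by
    calc 4 * c / q = ((4 * c / q) ^ (1 / (1 - s))) ^ (1 - s) := by
          rw [← Real.rpow_mul hA.le, one_div_mul_cancel (by linarith), Real.rpow_one]
      _ ≤ x ^ (1 - s) := Real.rpow_le_rpow (by positivity) hx (by linarith)
  have hms : m ^ s ≤ 2 * x ^ s := by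
    calc m ^ s ≤ (2 * x) ^ s := Real.rpow_le_rpow hm0.le hm hs0.le
      _ = 2 ^ s * x ^ s := Real.mul_rpow (by norm_num) hx0.le
      _ ≤ 2 * x ^ s := by
          have h2 : (2:ℝ) ^ s ≤ 2 ^ (1:ℝ) := Real.rpow_le_rpow_of_exponent_le one_le_two hs1.le
          rw [Real.rpow_one] at h2
          exact mul_le_mul_of_nonneg_right h2 (Real.rpow_nonneg hx0.le _)
  have hxsplit : x = x ^ s * x ^ (1 - s) := by
    rw [← Real.rpow_add hx0]; norm_num
  have hmain : c * m ^ s ≤ q / 2 * x := by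
    have hxsp : (0:ℝ) < x ^ s := Real.rpow_pos_of_pos hx0 _
    calc c * m ^ s ≤ c * (2 * x ^ s) := mul_le_mul_of_nonneg_left hms hc.le
      _ = 2 * c * x ^ s := by ring
      _ ≤ q / 2 * x := by
          have h5 : x ^ s * (4 * c / q) ≤ x ^ s * x ^ (1 - s) :=
            mul_le_mul_of_nonneg_left hxs hxsp.le
          rw [← hxsplit] at h5
          have h6 : q / 2 * (x ^ s * (4 * c / q)) = 2 * c * x ^ s := by
            field_simp; ring
          have h7 := mul_le_mul_of_nonneg_left h5 (show (0:ℝ) ≤ q / 2 by positivity)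
          linarith [h6 ▸ h7]
  rw [div_le_iff₀ hx0, Real.rpow_neg hm0.le]
  have hP : (0:ℝ) < m ^ s := Real.rpow_pos_of_pos hm0 _
  have h2 := mul_le_mul_of_nonneg_right hmain (inv_nonneg.mpr hP.le)
  calc c = c * m ^ s * (m ^ s)⁻¹ := by field_simp
    _ ≤ q / 2 * x * (m ^ s)⁻¹ := h2
    _ = q / 2 * (m ^ s)⁻¹ * x := by ring


/-- Lemma `un satisfies condition 2`.
Let `1 > α > β > 0`, `q₁, q₂ > 0`, let `ℓ` be a nonnegative integer with
`ℓ ≤ β/(2(α−β))`, and let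
`u_n = B₁ (n+1)^{−β/2} √(ln (B₂(n+1))) + B₃ (n+1)^{−(α−β)ℓ}` where `B₁, B₃ ≥ 0` with at
least one strictly positive and `B₂ ≥ 1`.  Then `u` is `α`-moderate from
`K_α(β/2)` onwards and `β`-moderate from `K_β(β/2)` onwards, and `u` is monotonically
decreasing from `e^{1/β}/B₂` onwards. -/
theorem stmt18 (α β q1 q2 : ℝ)
    (hβ : 0 < β) (hβα : β < α) (hα : α < 1) (hq1 : 0 < q1) (hq2 : 0 < q2)
    (ℓ : ℕ) (hℓ : (ℓ : ℝ) ≤ β / (2 * (α - β)))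
    (B1 B2 B3 : ℝ) (hB1 : 0 ≤ B1) (hB3 : 0 ≤ B3) (hpos : 0 < B1 ∨ 0 < B3) (hB2 : 1 ≤ B2)
    (u : ℕ → ℝ)
    (hu : ∀ n : ℕ, u n = B1 * ((n : ℝ) + 1) ^ (-(β / 2)) *
          Real.sqrt (Real.log (B2 * ((n : ℝ) + 1)))
        + B3 * ((n : ℝ) + 1) ^ (-((α - β) * ℓ)))
    (Kα Kβ : ℕ)
    (hKα : Kα = max ⌈(q1 / (2 * (α - β + β / 2))) ^ (1 / α)⌉₊
                    ⌈(4 * (α - β + β / 2) / q1) ^ (1 / (1 - α))⌉₊)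
    (hKβ : Kβ = max ⌈(q2 / (α - β + β / 2)) ^ (1 / β)⌉₊
                    ⌈(4 * (α - β + β / 2) / q2) ^ (1 / (1 - β))⌉₊) :
    AlphaModerateFrom α β q1 u Kα ∧ BetaModerateFrom α β q2 u Kβ ∧
      (∀ n : ℕ, Real.exp (1 / β) / B2 ≤ (n : ℝ) + 1 → u (n + 1) ≤ u n) := by
  have hab : (0:ℝ) < α - β := by linarith
  have hc : (0:ℝ) < α - β + β / 2 := by linarith
  have hd0 : (0:ℝ) ≤ (α - β) * ℓ := by positivity
  have hdβ : (α - β) * ℓ ≤ β / 2 := by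
    have h2 := mul_le_mul_of_nonneg_left hℓ hab.le
    have h3 : (α - β) * (β / (2 * (α - β))) = β / 2 := by field_simp
    linarith [h3 ▸ h2]
  have hdc : (α - β) * ℓ + (α - β) ≤ α - β + β / 2 := by linarith
  have hupos : ∀ n : ℕ, 1 ≤ n → 0 < u n := by
    intro n hn
    have hn1 : (2:ℝ) ≤ (n:ℝ) + 1 := by
      have : (1:ℝ) ≤ (n:ℝ) := by exact_mod_cast hn
      linarith
    have hp0 : (0:ℝ) < (n:ℝ) + 1 := by linarith
    rw [hu n]
    rcases hpos with h | h
    · have hlogpos : 0 < Real.log (B2 * ((n:ℝ) + 1)) := Real.log_pos (by nlinarith)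
      have h1 : 0 < B1 * ((n:ℝ) + 1) ^ (-(β / 2)) * Real.sqrt (Real.log (B2 * ((n:ℝ) + 1))) :=
        mul_pos (mul_pos h (Real.rpow_pos_of_pos hp0 _)) (Real.sqrt_pos.mpr hlogpos)
      have h2 : 0 ≤ B3 * ((n:ℝ) + 1) ^ (-((α - β) * ℓ)) := by positivity
      linarith
    · have h1 : 0 ≤ B1 * ((n:ℝ) + 1) ^ (-(β / 2)) * Real.sqrt (Real.log (B2 * ((n:ℝ) + 1))) := by
        positivity
      have h2 : 0 < B3 * ((n:ℝ) + 1) ^ (-((α - β) * ℓ)) :=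
        mul_pos h (Real.rpow_pos_of_pos hp0 _)
      linarith
  have hpre : ∀ x : ℝ, 0 < x →
      ((x+1) ^ (-α) / x ^ (-α)) * (x ^ (-β) / (x+1) ^ (-β)) = ((x+1)/x) ^ (β - α) := by
    intro x hx0
    have hy0 : (0:ℝ) < x + 1 := by linarith
    have hA : ((x:ℝ)+1) ^ (-α) ≠ 0 := (Real.rpow_pos_of_pos hy0 _).ne'
    have hBne : (x:ℝ) ^ (-α) ≠ 0 := (Real.rpow_pos_of_pos hx0 _).ne'
    have hC : (x:ℝ) ^ (-β) ≠ 0 := (Real.rpow_pos_of_pos hx0 _).ne'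
    have hD : ((x:ℝ)+1) ^ (-β) ≠ 0 := (Real.rpow_pos_of_pos hy0 _).ne'
    rw [Real.div_rpow hy0.le hx0.le,
      show β - α = -α - -β by ring, Real.rpow_sub hy0, Real.rpow_sub hx0]
    field_simp
  refine ⟨?_, ?_, ?_⟩
  · -- α-moderate
    intro k hk
    have hx0 : (0:ℝ) < (k:ℝ) + 1 := by positivity
    have hx1 : (1:ℝ) ≤ (k:ℝ) + 1 := by
      have : (0:ℝ) ≤ (k:ℝ) := Nat.cast_nonneg k
      linarith
    have hkc : (4 * (α - β + β / 2) / q1) ^ (1 / (1 - α)) ≤ (k:ℝ) := by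
      have h1 : ⌈(4 * (α - β + β / 2) / q1) ^ (1 / (1 - α))⌉₊ ≤ k :=
        le_trans (hKα ▸ le_max_right _ _) hk
      exact le_trans (Nat.le_ceil _) (by exact_mod_cast h1)
    have hE : (α - β + β / 2) / ((k:ℝ) + 1) ≤ q1 / 2 * (((k:ℝ) + 1) + 1) ^ (-α) :=
      stmt18thresh α q1 (α - β + β / 2) ((k:ℝ) + 1) (((k:ℝ) + 1) + 1)
        (by linarith) hα hq1 hc (by linarith) (by linarith) hx1 (by linarith)
    have hineq := stmt18key α β hβ hβα ((α - β) * ℓ) hd0 hdc B1 B2 B3 hB1 hB3 hB2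
      ((k:ℝ) + 1) (q1 / 2 * (((k:ℝ) + 1) + 1) ^ (-α)) hx1 hE
    rw [div_le_iff₀ (hupos (k+1) le_add_self)]
    calc u k = B1 * ((k:ℝ) + 1) ^ (-(β / 2)) * Real.sqrt (Real.log (B2 * ((k:ℝ) + 1)))
        + B3 * ((k:ℝ) + 1) ^ (-((α - β) * ℓ)) := hu k
      _ ≤ (((k:ℝ) + 1 + 1) / ((k:ℝ) + 1)) ^ (β - α) * Real.exp (q1 / 2 * (((k:ℝ) + 1) + 1) ^ (-α)) *
          (B1 * ((k:ℝ) + 1 + 1) ^ (-(β / 2)) * Real.sqrt (Real.log (B2 * ((k:ℝ) + 1 + 1)))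
            + B3 * ((k:ℝ) + 1 + 1) ^ (-((α - β) * ℓ))) := hineq
      _ = steps α (k + 1) / steps α k * (steps β k / steps β (k + 1)) *
          Real.exp (q1 / 2 * steps α (k + 1)) * u (k + 1) := by
        rw [hu (k+1)]
        simp only [steps]
        push_cast
        rw [hpre ((k:ℝ) + 1) hx0]
  · -- β-moderate
    intro k hk
    have hk1 : 1 ≤ k := by
      have h0 : 0 < (4 * (α - β + β / 2) / q2) ^ (1 / (1 - β)) := by positivity
      have h1 : 1 ≤ ⌈(4 * (α - β + β / 2) / q2) ^ (1 / (1 - β))⌉₊ := Nat.ceil_pos.mpr h0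
      exact le_trans (le_trans h1 (hKβ ▸ le_max_right _ _)) hk
    have hx0 : (0:ℝ) < (k:ℝ) + 1 := by positivity
    have hk1' : (1:ℝ) ≤ (k:ℝ) := by exact_mod_cast hk1
    have hx1 : (1:ℝ) ≤ (k:ℝ) + 1 := by linarith
    have hkc : (4 * (α - β + β / 2) / q2) ^ (1 / (1 - β)) ≤ (k:ℝ) := by
      have h1 : ⌈(4 * (α - β + β / 2) / q2) ^ (1 / (1 - β))⌉₊ ≤ k :=
        le_trans (hKβ ▸ le_max_right _ _) hk
      exact le_trans (Nat.le_ceil _) (by exact_mod_cast h1)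
    have hE : (α - β + β / 2) / ((k:ℝ) + 1) ≤ q2 / 2 * (((k:ℝ) + 1) + 2) ^ (-β) :=
      stmt18thresh β q2 (α - β + β / 2) ((k:ℝ) + 1) (((k:ℝ) + 1) + 2)
        hβ (by linarith) hq2 hc (by linarith) (by linarith) hx1 (by linarith)
    have hineq := stmt18key α β hβ hβα ((α - β) * ℓ) hd0 hdc B1 B2 B3 hB1 hB3 hB2
      ((k:ℝ) + 1) (q2 / 2 * (((k:ℝ) + 1) + 2) ^ (-β)) hx1 hE
    rw [div_le_iff₀ (hupos (k+1) le_add_self)]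
    calc u k = B1 * ((k:ℝ) + 1) ^ (-(β / 2)) * Real.sqrt (Real.log (B2 * ((k:ℝ) + 1)))
        + B3 * ((k:ℝ) + 1) ^ (-((α - β) * ℓ)) := hu k
      _ ≤ (((k:ℝ) + 1 + 1) / ((k:ℝ) + 1)) ^ (β - α) * Real.exp (q2 / 2 * (((k:ℝ) + 1) + 2) ^ (-β)) *
          (B1 * ((k:ℝ) + 1 + 1) ^ (-(β / 2)) * Real.sqrt (Real.log (B2 * ((k:ℝ) + 1 + 1)))
            + B3 * ((k:ℝ) + 1 + 1) ^ (-((α - β) * ℓ))) := hineq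
      _ = steps α (k + 1) / steps α k * (steps β k / steps β (k + 1)) *
          Real.exp (q2 / 2 * steps β (k + 2)) * u (k + 1) := by
        rw [hu (k+1)]
        simp only [steps]
        push_cast
        rw [hpre ((k:ℝ) + 1) hx0]
        ring_nf
  · -- monotone decreasing
    intro n hn
    rw [hu n, hu (n+1)]
    push_cast
    have hp0 : (0:ℝ) < (n:ℝ) + 1 := by positivity
    apply add_le_add
    · have hmono := stmt18mono β B2 ((n:ℝ) + 1) hβ hB2 hn
      calc B1 * ((n:ℝ) + 1 + 1) ^ (-(β / 2)) * Real.sqrt (Real.log (B2 * ((n:ℝ) + 1 + 1)))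
          = B1 * (((n:ℝ) + 1 + 1) ^ (-(β / 2)) * Real.sqrt (Real.log (B2 * ((n:ℝ) + 1 + 1)))) := by
            ring
        _ ≤ B1 * (((n:ℝ) + 1) ^ (-(β / 2)) * Real.sqrt (Real.log (B2 * ((n:ℝ) + 1)))) :=
            mul_le_mul_of_nonneg_left hmono hB1
        _ = B1 * ((n:ℝ) + 1) ^ (-(β / 2)) * Real.sqrt (Real.log (B2 * ((n:ℝ) + 1))) := by ring
    · have h1 : ((n:ℝ) + 1 + 1) ^ (-((α - β) * ℓ)) ≤ ((n:ℝ) + 1) ^ (-((α - β) * ℓ)) :=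
        Real.rpow_le_rpow_of_nonpos hp0 (by linarith) (by linarith)
      exact mul_le_mul_of_nonneg_left h1 hB3
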